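/- For any integers n ≥ 2 and k ≥ 2, there is a chores instance with n agents with identical additive valuations and an allocation that gives every agent at least (1+1/k) times its 1-out-of-n MMS, yet gives some agent strictly less than its 1-out-of-d MMS for every d ≥ 2. Concretely: one chore of value -k and k chores of value -1; MMS^d = MMS^n = -k for all d,n ≥ 2; the allocation giving agent 1 the hard chore plus one easy chore (value -k-1) and distributing the other k-1 easy chores among agents 2..n achieves the multiplicative bound but violates every ordinal bound for agent 1. -/

import Mathlib

open Finset

/-- The 1-out-of-`d` maximin share of an agent with additive valuation `v`
over `m` items: the maximum over partitions of the items into `d` bundles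
of the minimum bundle value. -/
noncomputable def MMS {m : ℕ} (d : ℕ) (v : Fin m → ℝ) : ℝ :=
  ⨆ P : Fin m → Fin d, ⨅ j : Fin d, ∑ i ∈ Finset.univ.filter (fun i => P i = j), v i

section helpers

variable {k : ℕ}

lemma v_nonpos (k : ℕ) (i : Fin (k+1)) :
    (if i.val = 0 then -(k : ℝ) else -1) ≤ 0 := by
  split <;> simp

lemma sum_v_le (hk : 1 ≤ k) (S : Finset (Fin (k+1))) (h0 : (0 : Fin (k+1)) ∈ S) :
    ∑ i ∈ S, (if i.val = 0 then -(k : ℝ) else -1) ≤ -(k : ℝ) := by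
  rw [← Finset.add_sum_erase _ _ h0]
  norm_num
  have : ∑ i ∈ S.erase 0, (if i.val = 0 then -(k : ℝ) else -1) ≤ 0 :=
    Finset.sum_nonpos fun i _ => v_nonpos k i
  refine le_trans (le_of_eq (Finset.sum_congr rfl fun i _ => ?_)) this
  simp only [Fin.ext_iff, Fin.val_zero]

lemma sum_v_small (S : Finset (Fin (k+1))) (h0 : ∀ i ∈ S, i.val ≠ 0) :
    ∑ i ∈ S, (if i.val = 0 then -(k : ℝ) else -1) = -(S.card : ℝ) := by
  rw [Finset.sum_congr rfl (fun i hi => if_neg (h0 i hi))]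
  simp

end helpers

theorem mms_eq (k : ℕ) (hk : 2 ≤ k) (d : ℕ) (hd : 2 ≤ d) :
    MMS d (fun i : Fin (k+1) => if i.val = 0 then -(k : ℝ) else -1) = -(k : ℝ) := by
  set v : Fin (k+1) → ℝ := fun i => if i.val = 0 then -(k : ℝ) else -1 with hv
  haveI : Nonempty (Fin d) := ⟨⟨0, by omega⟩⟩
  have hbddB : ∀ (f : Fin d → ℝ), BddBelow (Set.range f) :=
    fun f => (Set.finite_range f).bddBelow
  apply le_antisymm
  · apply ciSup_le
    intro P
    refine le_trans (ciInf_le (hbddB _) (P 0)) ?_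
    apply sum_v_le (by omega)
    simp
  · -- witness partition
    set P : Fin (k+1) → Fin d := fun i => if i.val = 0 then ⟨0, by omega⟩ else ⟨1, by omega⟩ with hP
    have hbddA : BddAbove (Set.range fun P : Fin (k+1) → Fin d =>
        ⨅ j : Fin d, ∑ i ∈ Finset.univ.filter (fun i => P i = j), v i) :=
      (Set.finite_range _).bddAbove
    refine le_trans ?_ (le_ciSup hbddA P)
    apply le_ciInf
    intro j
    by_cases hj0 : j = ⟨0, by omega⟩
    · have : Finset.univ.filter (fun i => P i = j) = {0} := by
        ext i
        simp only [Finset.mem_filter, Finset.mem_univ, true_and, Finset.mem_singleton, hP, hj0]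
        constructor
        · intro h
          by_contra hne
          have : i.val ≠ 0 := fun h' => hne (Fin.ext h')
          rw [if_neg this] at h
          simp [Fin.ext_iff] at h
        · intro h; subst h; simp
      rw [this]
      simp [hv]
    · by_cases hj1 : j = ⟨1, by omega⟩
      · have hsub : Finset.univ.filter (fun i => P i = j) = Finset.univ.filter (fun i : Fin (k+1) => i.val ≠ 0) := by
          ext i
          simp only [Finset.mem_filter, Finset.mem_univ, true_and, hP, hj1]
          constructor
          · intro h hi0
            rw [if_pos hi0] at h
            simp [Fin.ext_iff] at h
          · intro h; rw [if_neg h]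
        rw [hsub, sum_v_small _ (fun i hi => (Finset.mem_filter.mp hi).2)]
        have hcard : (Finset.univ.filter (fun i : Fin (k+1) => i.val ≠ 0)).card = k := by
          have : (Finset.univ.filter (fun i : Fin (k+1) => i.val ≠ 0)) = Finset.univ.erase 0 := by
            ext i; simp only [Finset.mem_filter, Finset.mem_univ, true_and, Finset.mem_erase, and_true, ne_eq, Fin.ext_iff, Fin.val_zero]
          rw [this, Finset.card_erase_of_mem (Finset.mem_univ _)]
          simp
        rw [hcard]
      · have : Finset.univ.filter (fun i => P i = j) = ∅ := by
          ext i
          simp only [Finset.mem_filter, Finset.mem_univ, true_and, Finset.notMem_empty, iff_false, hP]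
          intro h
          by_cases hi : i.val = 0
          · rw [if_pos hi] at h; exact hj0 h.symm
          · rw [if_neg hi] at h; exact hj1 h.symm
        rw [this]
        simp


/-- Multiplicative MMS approximation does not imply ordinal MMS approximation:
with one chore of value `-k` and `k` chores of value `-1`, `MMS^d = -k` for all
`d ≥ 2`, and there is an allocation among `n` agents giving every agent at least
`(1+1/k)` times its 1-out-of-`n` MMS while some agent gets strictly less than its
1-out-of-`d` MMS for every `d ≥ 2`. -/
theorem stmt8 (n k : ℕ) (hn : 2 ≤ n) (hk : 2 ≤ k) :
    let v : Fin (k + 1) → ℝ := fun i => if i.val = 0 then -(k : ℝ) else -1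
    (∀ d : ℕ, 2 ≤ d → MMS d v = -(k : ℝ)) ∧
    (∃ A : Fin (k + 1) → Fin n,
      (∀ j : Fin n,
        (1 + 1 / (k : ℝ)) * MMS n v ≤ ∑ i ∈ Finset.univ.filter (fun i => A i = j), v i) ∧
      (∃ j : Fin n, ∀ d : ℕ, 2 ≤ d →
        ∑ i ∈ Finset.univ.filter (fun i => A i = j), v i < MMS d v)) := by
  intro v
  have hmms : ∀ d : ℕ, 2 ≤ d → MMS d v = -(k : ℝ) := fun d hd => mms_eq k hk d hd
  refine ⟨hmms, ?_⟩
  have hk0 : (k : ℝ) ≠ 0 := by positivity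
  have hfac : (1 + 1 / (k : ℝ)) * (-(k : ℝ)) = -(k : ℝ) - 1 := by
    field_simp
    ring
  set A : Fin (k+1) → Fin n := fun i => if i.val ≤ 1 then ⟨0, by omega⟩ else ⟨1, by omega⟩ with hA
  have hbundle0 : ∑ i ∈ Finset.univ.filter (fun i => A i = ⟨0, by omega⟩), v i = -(k : ℝ) - 1 := by
    have hset : Finset.univ.filter (fun i => A i = (⟨0, by omega⟩ : Fin n))
        = {(0 : Fin (k+1)), (⟨1, by omega⟩ : Fin (k+1))} := by
      ext i
      simp only [Finset.mem_filter, Finset.mem_univ, true_and, Finset.mem_insert,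
        Finset.mem_singleton, hA]
      constructor
      · intro h
        by_cases hi : i.val ≤ 1
        · rcases Nat.le_one_iff_eq_zero_or_eq_one.mp hi with h0 | h1
          · left; exact Fin.ext h0
          · right; exact Fin.ext h1
        · rw [if_neg hi] at h; simp [Fin.ext_iff] at h
      · rintro (rfl | rfl) <;> simp
    rw [hset]
    rw [Finset.sum_pair (by simp [Fin.ext_iff])]
    simp only [v, Fin.val_zero, if_pos rfl]
    norm_num
    ring
  refine ⟨A, ?_, ⟨⟨0, by omega⟩, ?_⟩⟩
  · intro j
    rw [hmms n hn, hfac]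
    by_cases hj0 : j = ⟨0, by omega⟩
    · rw [hj0, hbundle0]
    · have hne : ∀ i ∈ Finset.univ.filter (fun i => A i = j), i.val ≠ 0 := by
        intro i hi
        simp only [Finset.mem_filter, hA] at hi
        intro h0
        rw [if_pos (by omega)] at hi
        exact hj0 hi.2.symm
      rw [sum_v_small _ hne]
      have hcard : (Finset.univ.filter (fun i => A i = j)).card ≤ k + 1 :=
        le_trans (Finset.card_filter_le _ _) (by simp)
      have : ((Finset.univ.filter (fun i => A i = j)).card : ℝ) ≤ (k : ℝ) + 1 := by
        exact_mod_cast hcard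
      linarith
  · intro d hd
    rw [hmms d hd, hbundle0]
    linarith
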